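/- The hyperbolic even 2-elementary lattice U ⊕ E8 ⊕ E8 is generated by 19 vectors α_1,...,α_19 of square -2 whose Gram matrix is given by the Coxeter diagram in which α_1,...,α_9 and α_11,...,α_19 form two E8-chains attached to α_10, and these generators satisfy the single relation 3α_1 + 2α_2 + 4α_3 + 6α_4 + 5α_5 + 4α_6 + 3α_7 + 2α_8 + α_9 = 3α_19 + 2α_18 + 4α_17 + 6α_16 + 5α_15 + 4α_14 + 3α_13 + 2α_12 + α_11. -/

import Mathlib

noncomputable section

/-- The hyperbolic plane lattice `U`, as `ℤ²`. -/
abbrev ULat := Fin 2 → ℤ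
/-- The (negative definite) `E8` lattice, as `ℤ⁸`. -/
abbrev E8Lat := Fin 8 → ℤ

/-- Gram matrix of the hyperbolic plane `U`. -/
def Ugram : Matrix (Fin 2) (Fin 2) ℤ := !![0,1;1,0]

/-- Gram matrix of the negative definite `E8` lattice (negative of the E8 Cartan matrix,
in Bourbaki labeling). -/
def E8gram : Matrix (Fin 8) (Fin 8) ℤ :=
  !![-2,0,1,0,0,0,0,0;
     0,-2,0,1,0,0,0,0;
     1,0,-2,1,0,0,0,0;
     0,1,1,-2,1,0,0,0;
     0,0,0,1,-2,1,0,0;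
     0,0,0,0,1,-2,1,0;
     0,0,0,0,0,1,-2,1;
     0,0,0,0,0,0,1,-2]

/-- The bilinear form of `U`. -/
def Ubil : ULat →ₗ[ℤ] ULat →ₗ[ℤ] ℤ := Matrix.toLinearMap₂' ℤ Ugram
/-- The bilinear form of `E8`. -/
def E8bil : E8Lat →ₗ[ℤ] E8Lat →ₗ[ℤ] ℤ := Matrix.toLinearMap₂' ℤ E8gram

/-- Orthogonal direct sum of two bilinear forms. -/
def prodBil {M N : Type} [AddCommGroup M] [Module ℤ M] [AddCommGroup N] [Module ℤ N]
    (bM : M →ₗ[ℤ] M →ₗ[ℤ] ℤ) (bN : N →ₗ[ℤ] N →ₗ[ℤ] ℤ) :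
    (M × N) →ₗ[ℤ] (M × N) →ₗ[ℤ] ℤ :=
  LinearMap.mk₂ ℤ (fun x y => bM x.1 y.1 + bN x.2 y.2)
    (fun a b c => by simp [map_add]; ring)
    (fun r a b => by simp; ring)
    (fun a b c => by simp [map_add]; ring)
    (fun r a b => by simp; ring)

/-- Two (ℤ-)lattices with forms (valued in `R`) are isometric. -/
def IsometricForms {R M N : Type} [AddCommGroup M] [Module ℤ M] [AddCommGroup N] [Module ℤ N]
    (bM : M → M → R) (bN : N → N → R) : Prop :=
  ∃ e : M ≃ₗ[ℤ] N, ∀ x y, bN (e x) (e y) = bM x y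


/-- The lattice `U ⊕ E8 ⊕ E8`. -/
abbrev UE8E8Lat := ULat × E8Lat × E8Lat

/-- The bilinear form of `U ⊕ E8 ⊕ E8`. -/
def UE8E8bil : UE8E8Lat →ₗ[ℤ] UE8E8Lat →ₗ[ℤ] ℤ :=
  prodBil Ubil (prodBil E8bil E8bil)

/-- The Gram matrix of the 19 simple roots `α_1, …, α_19` in Vinberg's Coxeter diagram for
`U ⊕ E8²`: all squares are `-2`; the vertices `α_2, α_3, …, α_18` form a chain, `α_1` is
attached to `α_4`, and `α_19` is attached to `α_16` (so `α_1,…,α_9` and `α_11,…,α_19` form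
two `E8`-chains attached to `α_10`); all other products vanish.  Indexing: `i : Fin 19`
corresponds to `α_{i+1}`. -/
def gram19 : Matrix (Fin 19) (Fin 19) ℤ := fun i j =>
  if i = j then -2
  else if (2 ≤ i.val + 1 ∧ i.val + 1 ≤ 17 ∧ j.val = i.val + 1) ∨
          (2 ≤ j.val + 1 ∧ j.val + 1 ≤ 17 ∧ i.val = j.val + 1) ∨
          (i.val + 1 = 1 ∧ j.val + 1 = 4) ∨ (j.val + 1 = 1 ∧ i.val + 1 = 4) ∨
          (i.val + 1 = 19 ∧ j.val + 1 = 16) ∨ (j.val + 1 = 19 ∧ i.val + 1 = 16)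
  then 1 else 0

/-- The coefficient vector of the single relation among the 19 roots,
`3α_1 + 2α_2 + 4α_3 + 6α_4 + 5α_5 + 4α_6 + 3α_7 + 2α_8 + α_9
  = 3α_19 + 2α_18 + 4α_17 + 6α_16 + 5α_15 + 4α_14 + 3α_13 + 2α_12 + α_11`. -/
def relCoef : Fin 19 → ℤ := ![3,2,4,6,5,4,3,2,1,0,-1,-2,-3,-4,-5,-6,-4,-2,-3]

def alphaV : Fin 19 → UE8E8Lat := ![
  (![0,0], ![0,1,0,0,0,0,0,0], ![0,0,0,0,0,0,0,0]),
  (![0,0], ![1,0,0,0,0,0,0,0], ![0,0,0,0,0,0,0,0]),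
  (![0,0], ![0,0,1,0,0,0,0,0], ![0,0,0,0,0,0,0,0]),
  (![0,0], ![0,0,0,1,0,0,0,0], ![0,0,0,0,0,0,0,0]),
  (![0,0], ![0,0,0,0,1,0,0,0], ![0,0,0,0,0,0,0,0]),
  (![0,0], ![0,0,0,0,0,1,0,0], ![0,0,0,0,0,0,0,0]),
  (![0,0], ![0,0,0,0,0,0,1,0], ![0,0,0,0,0,0,0,0]),
  (![0,0], ![0,0,0,0,0,0,0,1], ![0,0,0,0,0,0,0,0]),
  (![1,0], ![-2,-3,-4,-6,-5,-4,-3,-2], ![0,0,0,0,0,0,0,0]),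
  (![-1,1], ![0,0,0,0,0,0,0,0], ![0,0,0,0,0,0,0,0]),
  (![1,0], ![0,0,0,0,0,0,0,0], ![-2,-3,-4,-6,-5,-4,-3,-2]),
  (![0,0], ![0,0,0,0,0,0,0,0], ![0,0,0,0,0,0,0,1]),
  (![0,0], ![0,0,0,0,0,0,0,0], ![0,0,0,0,0,0,1,0]),
  (![0,0], ![0,0,0,0,0,0,0,0], ![0,0,0,0,0,1,0,0]),
  (![0,0], ![0,0,0,0,0,0,0,0], ![0,0,0,0,1,0,0,0]),
  (![0,0], ![0,0,0,0,0,0,0,0], ![0,0,0,1,0,0,0,0]),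
  (![0,0], ![0,0,0,0,0,0,0,0], ![0,0,1,0,0,0,0,0]),
  (![0,0], ![0,0,0,0,0,0,0,0], ![1,0,0,0,0,0,0,0]),
  (![0,0], ![0,0,0,0,0,0,0,0], ![0,1,0,0,0,0,0,0])]

set_option maxHeartbeats 4000000 in
/-- The hyperbolic even 2-elementary lattice `U ⊕ E8 ⊕ E8` is generated by 19 vectors of
square `-2` realizing the Coxeter diagram `gram19`, and these generators satisfy the single
relation `3α_1 + 2α_2 + 4α_3 + 6α_4 + 5α_5 + 4α_6 + 3α_7 + 2α_8 + α_9 =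
3α_19 + 2α_18 + 4α_17 + 6α_16 + 5α_15 + 4α_14 + 3α_13 + 2α_12 + α_11`
(any other relation being an integer multiple of it). -/
theorem stmt9 :
    ∃ α : Fin 19 → UE8E8Lat,
      (∀ i j, UE8E8bil (α i) (α j) = gram19 i j) ∧
      Submodule.span ℤ (Set.range α) = ⊤ ∧
      ((3:ℤ) • α 0 + (2:ℤ) • α 1 + (4:ℤ) • α 2 + (6:ℤ) • α 3 + (5:ℤ) • α 4 +
        (4:ℤ) • α 5 + (3:ℤ) • α 6 + (2:ℤ) • α 7 + α 8
        = (3:ℤ) • α 18 + (2:ℤ) • α 17 + (4:ℤ) • α 16 + (6:ℤ) • α 15 + (5:ℤ) • α 14 +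
          (4:ℤ) • α 13 + (3:ℤ) • α 12 + (2:ℤ) • α 11 + α 10) ∧
      (∀ c : Fin 19 → ℤ, (∑ i, c i • α i = 0) → ∃ k : ℤ, c = k • relCoef) := by
  have hgram : ∀ i j, UE8E8bil (alphaV i) (alphaV j) = gram19 i j := by
    exact @of_decide_eq_true _ (@Fintype.decidableForallFintype _ _ (fun i => inferInstance) _) rfl
  have hmem : ∀ i, alphaV i ∈ Submodule.span ℤ (Set.range alphaV) :=
    fun i => Submodule.subset_span ⟨i, rfl⟩
  refine ⟨alphaV, hgram, ?_, by decide, ?_⟩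
  · -- spanning
    have he : ((![1,0], ![0,0,0,0,0,0,0,0], ![0,0,0,0,0,0,0,0]) : UE8E8Lat) ∈
        Submodule.span ℤ (Set.range alphaV) := by
      have hcomb : ((![1,0], ![0,0,0,0,0,0,0,0], ![0,0,0,0,0,0,0,0]) : UE8E8Lat) =
        alphaV 8 + (3:ℤ) • alphaV 0 + (2:ℤ) • alphaV 1 + (4:ℤ) • alphaV 2 + (6:ℤ) • alphaV 3 +
        (5:ℤ) • alphaV 4 + (4:ℤ) • alphaV 5 + (3:ℤ) • alphaV 6 + (2:ℤ) • alphaV 7 := by decide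
      rw [hcomb]
      exact add_mem (add_mem (add_mem (add_mem (add_mem (add_mem (add_mem (add_mem (hmem 8)
        (Submodule.smul_mem _ _ (hmem 0))) (Submodule.smul_mem _ _ (hmem 1)))
        (Submodule.smul_mem _ _ (hmem 2))) (Submodule.smul_mem _ _ (hmem 3)))
        (Submodule.smul_mem _ _ (hmem 4))) (Submodule.smul_mem _ _ (hmem 5)))
        (Submodule.smul_mem _ _ (hmem 6))) (Submodule.smul_mem _ _ (hmem 7))
    have hf : ((![0,1], ![0,0,0,0,0,0,0,0], ![0,0,0,0,0,0,0,0]) : UE8E8Lat) ∈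
        Submodule.span ℤ (Set.range alphaV) := by
      have hcomb : ((![0,1], ![0,0,0,0,0,0,0,0], ![0,0,0,0,0,0,0,0]) : UE8E8Lat) =
        alphaV 9 + ((![1,0], ![0,0,0,0,0,0,0,0], ![0,0,0,0,0,0,0,0]) : UE8E8Lat) := by decide
      rw [hcomb]; exact add_mem (hmem 9) he
    rw [eq_top_iff,
      ← ((Pi.basisFun ℤ (Fin 2)).prod ((Pi.basisFun ℤ (Fin 8)).prod (Pi.basisFun ℤ (Fin 8)))).span_eq]
    refine Submodule.span_le.mpr ?_
    rintro x ⟨i, rfl⟩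
    obtain u | j | k := i
    · fin_cases u
      · show ((Pi.basisFun ℤ (Fin 2)).prod ((Pi.basisFun ℤ (Fin 8)).prod (Pi.basisFun ℤ (Fin 8)))) (Sum.inl 0) ∈ Submodule.span ℤ (Set.range alphaV)
        rw [show ((Pi.basisFun ℤ (Fin 2)).prod ((Pi.basisFun ℤ (Fin 8)).prod (Pi.basisFun ℤ (Fin 8)))) (Sum.inl 0) = ((![1,0], ![0,0,0,0,0,0,0,0], ![0,0,0,0,0,0,0,0]) : UE8E8Lat) from by
          refine Prod.ext ?_ (Prod.ext ?_ ?_) <;> simp [Module.Basis.prod_apply, Pi.basisFun_apply] <;> decide]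
        exact he
      · show ((Pi.basisFun ℤ (Fin 2)).prod ((Pi.basisFun ℤ (Fin 8)).prod (Pi.basisFun ℤ (Fin 8)))) (Sum.inl 1) ∈ Submodule.span ℤ (Set.range alphaV)
        rw [show ((Pi.basisFun ℤ (Fin 2)).prod ((Pi.basisFun ℤ (Fin 8)).prod (Pi.basisFun ℤ (Fin 8)))) (Sum.inl 1) = ((![0,1], ![0,0,0,0,0,0,0,0], ![0,0,0,0,0,0,0,0]) : UE8E8Lat) from by
          refine Prod.ext ?_ (Prod.ext ?_ ?_) <;> simp [Module.Basis.prod_apply, Pi.basisFun_apply] <;> decide]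
        exact hf
    · fin_cases j
      · show ((Pi.basisFun ℤ (Fin 2)).prod ((Pi.basisFun ℤ (Fin 8)).prod (Pi.basisFun ℤ (Fin 8)))) (Sum.inr (Sum.inl 0)) ∈ Submodule.span ℤ (Set.range alphaV)
        rw [show ((Pi.basisFun ℤ (Fin 2)).prod ((Pi.basisFun ℤ (Fin 8)).prod (Pi.basisFun ℤ (Fin 8)))) (Sum.inr (Sum.inl 0)) = ((![0,0], ![1,0,0,0,0,0,0,0], ![0,0,0,0,0,0,0,0]) : UE8E8Lat) from by
          refine Prod.ext ?_ (Prod.ext ?_ ?_) <;> simp [Module.Basis.prod_apply, Pi.basisFun_apply] <;> decide,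
          show ((![0,0], ![1,0,0,0,0,0,0,0], ![0,0,0,0,0,0,0,0]) : UE8E8Lat) = alphaV 1 from by decide]
        exact hmem 1
      · show ((Pi.basisFun ℤ (Fin 2)).prod ((Pi.basisFun ℤ (Fin 8)).prod (Pi.basisFun ℤ (Fin 8)))) (Sum.inr (Sum.inl 1)) ∈ Submodule.span ℤ (Set.range alphaV)
        rw [show ((Pi.basisFun ℤ (Fin 2)).prod ((Pi.basisFun ℤ (Fin 8)).prod (Pi.basisFun ℤ (Fin 8)))) (Sum.inr (Sum.inl 1)) = ((![0,0], ![0,1,0,0,0,0,0,0], ![0,0,0,0,0,0,0,0]) : UE8E8Lat) from by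
          refine Prod.ext ?_ (Prod.ext ?_ ?_) <;> simp [Module.Basis.prod_apply, Pi.basisFun_apply] <;> decide,
          show ((![0,0], ![0,1,0,0,0,0,0,0], ![0,0,0,0,0,0,0,0]) : UE8E8Lat) = alphaV 0 from by decide]
        exact hmem 0
      · show ((Pi.basisFun ℤ (Fin 2)).prod ((Pi.basisFun ℤ (Fin 8)).prod (Pi.basisFun ℤ (Fin 8)))) (Sum.inr (Sum.inl 2)) ∈ Submodule.span ℤ (Set.range alphaV)
        rw [show ((Pi.basisFun ℤ (Fin 2)).prod ((Pi.basisFun ℤ (Fin 8)).prod (Pi.basisFun ℤ (Fin 8)))) (Sum.inr (Sum.inl 2)) = ((![0,0], ![0,0,1,0,0,0,0,0], ![0,0,0,0,0,0,0,0]) : UE8E8Lat) from by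
          refine Prod.ext ?_ (Prod.ext ?_ ?_) <;> simp [Module.Basis.prod_apply, Pi.basisFun_apply] <;> decide,
          show ((![0,0], ![0,0,1,0,0,0,0,0], ![0,0,0,0,0,0,0,0]) : UE8E8Lat) = alphaV 2 from by decide]
        exact hmem 2
      · show ((Pi.basisFun ℤ (Fin 2)).prod ((Pi.basisFun ℤ (Fin 8)).prod (Pi.basisFun ℤ (Fin 8)))) (Sum.inr (Sum.inl 3)) ∈ Submodule.span ℤ (Set.range alphaV)
        rw [show ((Pi.basisFun ℤ (Fin 2)).prod ((Pi.basisFun ℤ (Fin 8)).prod (Pi.basisFun ℤ (Fin 8)))) (Sum.inr (Sum.inl 3)) = ((![0,0], ![0,0,0,1,0,0,0,0], ![0,0,0,0,0,0,0,0]) : UE8E8Lat) from by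
          refine Prod.ext ?_ (Prod.ext ?_ ?_) <;> simp [Module.Basis.prod_apply, Pi.basisFun_apply] <;> decide,
          show ((![0,0], ![0,0,0,1,0,0,0,0], ![0,0,0,0,0,0,0,0]) : UE8E8Lat) = alphaV 3 from by decide]
        exact hmem 3
      · show ((Pi.basisFun ℤ (Fin 2)).prod ((Pi.basisFun ℤ (Fin 8)).prod (Pi.basisFun ℤ (Fin 8)))) (Sum.inr (Sum.inl 4)) ∈ Submodule.span ℤ (Set.range alphaV)
        rw [show ((Pi.basisFun ℤ (Fin 2)).prod ((Pi.basisFun ℤ (Fin 8)).prod (Pi.basisFun ℤ (Fin 8)))) (Sum.inr (Sum.inl 4)) = ((![0,0], ![0,0,0,0,1,0,0,0], ![0,0,0,0,0,0,0,0]) : UE8E8Lat) from by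
          refine Prod.ext ?_ (Prod.ext ?_ ?_) <;> simp [Module.Basis.prod_apply, Pi.basisFun_apply] <;> decide,
          show ((![0,0], ![0,0,0,0,1,0,0,0], ![0,0,0,0,0,0,0,0]) : UE8E8Lat) = alphaV 4 from by decide]
        exact hmem 4
      · show ((Pi.basisFun ℤ (Fin 2)).prod ((Pi.basisFun ℤ (Fin 8)).prod (Pi.basisFun ℤ (Fin 8)))) (Sum.inr (Sum.inl 5)) ∈ Submodule.span ℤ (Set.range alphaV)
        rw [show ((Pi.basisFun ℤ (Fin 2)).prod ((Pi.basisFun ℤ (Fin 8)).prod (Pi.basisFun ℤ (Fin 8)))) (Sum.inr (Sum.inl 5)) = ((![0,0], ![0,0,0,0,0,1,0,0], ![0,0,0,0,0,0,0,0]) : UE8E8Lat) from by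
          refine Prod.ext ?_ (Prod.ext ?_ ?_) <;> simp [Module.Basis.prod_apply, Pi.basisFun_apply] <;> decide,
          show ((![0,0], ![0,0,0,0,0,1,0,0], ![0,0,0,0,0,0,0,0]) : UE8E8Lat) = alphaV 5 from by decide]
        exact hmem 5
      · show ((Pi.basisFun ℤ (Fin 2)).prod ((Pi.basisFun ℤ (Fin 8)).prod (Pi.basisFun ℤ (Fin 8)))) (Sum.inr (Sum.inl 6)) ∈ Submodule.span ℤ (Set.range alphaV)
        rw [show ((Pi.basisFun ℤ (Fin 2)).prod ((Pi.basisFun ℤ (Fin 8)).prod (Pi.basisFun ℤ (Fin 8)))) (Sum.inr (Sum.inl 6)) = ((![0,0], ![0,0,0,0,0,0,1,0], ![0,0,0,0,0,0,0,0]) : UE8E8Lat) from by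
          refine Prod.ext ?_ (Prod.ext ?_ ?_) <;> simp [Module.Basis.prod_apply, Pi.basisFun_apply] <;> decide,
          show ((![0,0], ![0,0,0,0,0,0,1,0], ![0,0,0,0,0,0,0,0]) : UE8E8Lat) = alphaV 6 from by decide]
        exact hmem 6
      · show ((Pi.basisFun ℤ (Fin 2)).prod ((Pi.basisFun ℤ (Fin 8)).prod (Pi.basisFun ℤ (Fin 8)))) (Sum.inr (Sum.inl 7)) ∈ Submodule.span ℤ (Set.range alphaV)
        rw [show ((Pi.basisFun ℤ (Fin 2)).prod ((Pi.basisFun ℤ (Fin 8)).prod (Pi.basisFun ℤ (Fin 8)))) (Sum.inr (Sum.inl 7)) = ((![0,0], ![0,0,0,0,0,0,0,1], ![0,0,0,0,0,0,0,0]) : UE8E8Lat) from by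
          refine Prod.ext ?_ (Prod.ext ?_ ?_) <;> simp [Module.Basis.prod_apply, Pi.basisFun_apply] <;> decide,
          show ((![0,0], ![0,0,0,0,0,0,0,1], ![0,0,0,0,0,0,0,0]) : UE8E8Lat) = alphaV 7 from by decide]
        exact hmem 7
    · fin_cases k
      · show ((Pi.basisFun ℤ (Fin 2)).prod ((Pi.basisFun ℤ (Fin 8)).prod (Pi.basisFun ℤ (Fin 8)))) (Sum.inr (Sum.inr 0)) ∈ Submodule.span ℤ (Set.range alphaV)
        rw [show ((Pi.basisFun ℤ (Fin 2)).prod ((Pi.basisFun ℤ (Fin 8)).prod (Pi.basisFun ℤ (Fin 8)))) (Sum.inr (Sum.inr 0)) = ((![0,0], ![0,0,0,0,0,0,0,0], ![1,0,0,0,0,0,0,0]) : UE8E8Lat) from by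
          refine Prod.ext ?_ (Prod.ext ?_ ?_) <;> simp [Module.Basis.prod_apply, Pi.basisFun_apply] <;> decide,
          show ((![0,0], ![0,0,0,0,0,0,0,0], ![1,0,0,0,0,0,0,0]) : UE8E8Lat) = alphaV 17 from by decide]
        exact hmem 17
      · show ((Pi.basisFun ℤ (Fin 2)).prod ((Pi.basisFun ℤ (Fin 8)).prod (Pi.basisFun ℤ (Fin 8)))) (Sum.inr (Sum.inr 1)) ∈ Submodule.span ℤ (Set.range alphaV)
        rw [show ((Pi.basisFun ℤ (Fin 2)).prod ((Pi.basisFun ℤ (Fin 8)).prod (Pi.basisFun ℤ (Fin 8)))) (Sum.inr (Sum.inr 1)) = ((![0,0], ![0,0,0,0,0,0,0,0], ![0,1,0,0,0,0,0,0]) : UE8E8Lat) from by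
          refine Prod.ext ?_ (Prod.ext ?_ ?_) <;> simp [Module.Basis.prod_apply, Pi.basisFun_apply] <;> decide,
          show ((![0,0], ![0,0,0,0,0,0,0,0], ![0,1,0,0,0,0,0,0]) : UE8E8Lat) = alphaV 18 from by decide]
        exact hmem 18
      · show ((Pi.basisFun ℤ (Fin 2)).prod ((Pi.basisFun ℤ (Fin 8)).prod (Pi.basisFun ℤ (Fin 8)))) (Sum.inr (Sum.inr 2)) ∈ Submodule.span ℤ (Set.range alphaV)
        rw [show ((Pi.basisFun ℤ (Fin 2)).prod ((Pi.basisFun ℤ (Fin 8)).prod (Pi.basisFun ℤ (Fin 8)))) (Sum.inr (Sum.inr 2)) = ((![0,0], ![0,0,0,0,0,0,0,0], ![0,0,1,0,0,0,0,0]) : UE8E8Lat) from by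
          refine Prod.ext ?_ (Prod.ext ?_ ?_) <;> simp [Module.Basis.prod_apply, Pi.basisFun_apply] <;> decide,
          show ((![0,0], ![0,0,0,0,0,0,0,0], ![0,0,1,0,0,0,0,0]) : UE8E8Lat) = alphaV 16 from by decide]
        exact hmem 16
      · show ((Pi.basisFun ℤ (Fin 2)).prod ((Pi.basisFun ℤ (Fin 8)).prod (Pi.basisFun ℤ (Fin 8)))) (Sum.inr (Sum.inr 3)) ∈ Submodule.span ℤ (Set.range alphaV)
        rw [show ((Pi.basisFun ℤ (Fin 2)).prod ((Pi.basisFun ℤ (Fin 8)).prod (Pi.basisFun ℤ (Fin 8)))) (Sum.inr (Sum.inr 3)) = ((![0,0], ![0,0,0,0,0,0,0,0], ![0,0,0,1,0,0,0,0]) : UE8E8Lat) from by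
          refine Prod.ext ?_ (Prod.ext ?_ ?_) <;> simp [Module.Basis.prod_apply, Pi.basisFun_apply] <;> decide,
          show ((![0,0], ![0,0,0,0,0,0,0,0], ![0,0,0,1,0,0,0,0]) : UE8E8Lat) = alphaV 15 from by decide]
        exact hmem 15
      · show ((Pi.basisFun ℤ (Fin 2)).prod ((Pi.basisFun ℤ (Fin 8)).prod (Pi.basisFun ℤ (Fin 8)))) (Sum.inr (Sum.inr 4)) ∈ Submodule.span ℤ (Set.range alphaV)
        rw [show ((Pi.basisFun ℤ (Fin 2)).prod ((Pi.basisFun ℤ (Fin 8)).prod (Pi.basisFun ℤ (Fin 8)))) (Sum.inr (Sum.inr 4)) = ((![0,0], ![0,0,0,0,0,0,0,0], ![0,0,0,0,1,0,0,0]) : UE8E8Lat) from by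
          refine Prod.ext ?_ (Prod.ext ?_ ?_) <;> simp [Module.Basis.prod_apply, Pi.basisFun_apply] <;> decide,
          show ((![0,0], ![0,0,0,0,0,0,0,0], ![0,0,0,0,1,0,0,0]) : UE8E8Lat) = alphaV 14 from by decide]
        exact hmem 14
      · show ((Pi.basisFun ℤ (Fin 2)).prod ((Pi.basisFun ℤ (Fin 8)).prod (Pi.basisFun ℤ (Fin 8)))) (Sum.inr (Sum.inr 5)) ∈ Submodule.span ℤ (Set.range alphaV)
        rw [show ((Pi.basisFun ℤ (Fin 2)).prod ((Pi.basisFun ℤ (Fin 8)).prod (Pi.basisFun ℤ (Fin 8)))) (Sum.inr (Sum.inr 5)) = ((![0,0], ![0,0,0,0,0,0,0,0], ![0,0,0,0,0,1,0,0]) : UE8E8Lat) from by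
          refine Prod.ext ?_ (Prod.ext ?_ ?_) <;> simp [Module.Basis.prod_apply, Pi.basisFun_apply] <;> decide,
          show ((![0,0], ![0,0,0,0,0,0,0,0], ![0,0,0,0,0,1,0,0]) : UE8E8Lat) = alphaV 13 from by decide]
        exact hmem 13
      · show ((Pi.basisFun ℤ (Fin 2)).prod ((Pi.basisFun ℤ (Fin 8)).prod (Pi.basisFun ℤ (Fin 8)))) (Sum.inr (Sum.inr 6)) ∈ Submodule.span ℤ (Set.range alphaV)
        rw [show ((Pi.basisFun ℤ (Fin 2)).prod ((Pi.basisFun ℤ (Fin 8)).prod (Pi.basisFun ℤ (Fin 8)))) (Sum.inr (Sum.inr 6)) = ((![0,0], ![0,0,0,0,0,0,0,0], ![0,0,0,0,0,0,1,0]) : UE8E8Lat) from by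
          refine Prod.ext ?_ (Prod.ext ?_ ?_) <;> simp [Module.Basis.prod_apply, Pi.basisFun_apply] <;> decide,
          show ((![0,0], ![0,0,0,0,0,0,0,0], ![0,0,0,0,0,0,1,0]) : UE8E8Lat) = alphaV 12 from by decide]
        exact hmem 12
      · show ((Pi.basisFun ℤ (Fin 2)).prod ((Pi.basisFun ℤ (Fin 8)).prod (Pi.basisFun ℤ (Fin 8)))) (Sum.inr (Sum.inr 7)) ∈ Submodule.span ℤ (Set.range alphaV)
        rw [show ((Pi.basisFun ℤ (Fin 2)).prod ((Pi.basisFun ℤ (Fin 8)).prod (Pi.basisFun ℤ (Fin 8)))) (Sum.inr (Sum.inr 7)) = ((![0,0], ![0,0,0,0,0,0,0,0], ![0,0,0,0,0,0,0,1]) : UE8E8Lat) from by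
          refine Prod.ext ?_ (Prod.ext ?_ ?_) <;> simp [Module.Basis.prod_apply, Pi.basisFun_apply] <;> decide,
          show ((![0,0], ![0,0,0,0,0,0,0,0], ![0,0,0,0,0,0,0,1]) : UE8E8Lat) = alphaV 11 from by decide]
        exact hmem 11
  · -- uniqueness of the relation
    intro c h
    have hc : ∀ j, c 0 * gram19 0 j + (c 1 * gram19 1 j + (c 2 * gram19 2 j +
        (c 3 * gram19 3 j + (c 4 * gram19 4 j + (c 5 * gram19 5 j + (c 6 * gram19 6 j +
        (c 7 * gram19 7 j + (c 8 * gram19 8 j + (c 9 * gram19 9 j + (c 10 * gram19 10 j +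
        (c 11 * gram19 11 j + (c 12 * gram19 12 j + (c 13 * gram19 13 j + (c 14 * gram19 14 j +
        (c 15 * gram19 15 j + (c 16 * gram19 16 j + (c 17 * gram19 17 j +
        (c 18 * gram19 18 j + 0)))))))))))))))))) = 0 := by
      intro j
      have h2 := congrArg (fun z => UE8E8bil z (alphaV j)) h
      simp only [map_sum, LinearMap.coe_sum, Finset.sum_apply, map_smul,
        LinearMap.smul_apply, smul_eq_mul, map_zero, LinearMap.zero_apply, hgram] at h2
      exact h2
    have E0 : c 0 * (-2) + (c 1 * (0) + (c 2 * (0) + (c 3 * (1) + (c 4 * (0) + (c 5 * (0) + (c 6 * (0) + (c 7 * (0) + (c 8 * (0) + (c 9 * (0) + (c 10 * (0) + (c 11 * (0) + (c 12 * (0) + (c 13 * (0) + (c 14 * (0) + (c 15 * (0) + (c 16 * (0) + (c 17 * (0) + (c 18 * (0) + 0)))))))))))))))))) = 0 := hc 0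
    have E1 : c 0 * (0) + (c 1 * (-2) + (c 2 * (1) + (c 3 * (0) + (c 4 * (0) + (c 5 * (0) + (c 6 * (0) + (c 7 * (0) + (c 8 * (0) + (c 9 * (0) + (c 10 * (0) + (c 11 * (0) + (c 12 * (0) + (c 13 * (0) + (c 14 * (0) + (c 15 * (0) + (c 16 * (0) + (c 17 * (0) + (c 18 * (0) + 0)))))))))))))))))) = 0 := hc 1
    have E2 : c 0 * (0) + (c 1 * (1) + (c 2 * (-2) + (c 3 * (1) + (c 4 * (0) + (c 5 * (0) + (c 6 * (0) + (c 7 * (0) + (c 8 * (0) + (c 9 * (0) + (c 10 * (0) + (c 11 * (0) + (c 12 * (0) + (c 13 * (0) + (c 14 * (0) + (c 15 * (0) + (c 16 * (0) + (c 17 * (0) + (c 18 * (0) + 0)))))))))))))))))) = 0 := hc 2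
    have E3 : c 0 * (1) + (c 1 * (0) + (c 2 * (1) + (c 3 * (-2) + (c 4 * (1) + (c 5 * (0) + (c 6 * (0) + (c 7 * (0) + (c 8 * (0) + (c 9 * (0) + (c 10 * (0) + (c 11 * (0) + (c 12 * (0) + (c 13 * (0) + (c 14 * (0) + (c 15 * (0) + (c 16 * (0) + (c 17 * (0) + (c 18 * (0) + 0)))))))))))))))))) = 0 := hc 3
    have E4 : c 0 * (0) + (c 1 * (0) + (c 2 * (0) + (c 3 * (1) + (c 4 * (-2) + (c 5 * (1) + (c 6 * (0) + (c 7 * (0) + (c 8 * (0) + (c 9 * (0) + (c 10 * (0) + (c 11 * (0) + (c 12 * (0) + (c 13 * (0) + (c 14 * (0) + (c 15 * (0) + (c 16 * (0) + (c 17 * (0) + (c 18 * (0) + 0)))))))))))))))))) = 0 := hc 4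
    have E5 : c 0 * (0) + (c 1 * (0) + (c 2 * (0) + (c 3 * (0) + (c 4 * (1) + (c 5 * (-2) + (c 6 * (1) + (c 7 * (0) + (c 8 * (0) + (c 9 * (0) + (c 10 * (0) + (c 11 * (0) + (c 12 * (0) + (c 13 * (0) + (c 14 * (0) + (c 15 * (0) + (c 16 * (0) + (c 17 * (0) + (c 18 * (0) + 0)))))))))))))))))) = 0 := hc 5
    have E6 : c 0 * (0) + (c 1 * (0) + (c 2 * (0) + (c 3 * (0) + (c 4 * (0) + (c 5 * (1) + (c 6 * (-2) + (c 7 * (1) + (c 8 * (0) + (c 9 * (0) + (c 10 * (0) + (c 11 * (0) + (c 12 * (0) + (c 13 * (0) + (c 14 * (0) + (c 15 * (0) + (c 16 * (0) + (c 17 * (0) + (c 18 * (0) + 0)))))))))))))))))) = 0 := hc 6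
    have E7 : c 0 * (0) + (c 1 * (0) + (c 2 * (0) + (c 3 * (0) + (c 4 * (0) + (c 5 * (0) + (c 6 * (1) + (c 7 * (-2) + (c 8 * (1) + (c 9 * (0) + (c 10 * (0) + (c 11 * (0) + (c 12 * (0) + (c 13 * (0) + (c 14 * (0) + (c 15 * (0) + (c 16 * (0) + (c 17 * (0) + (c 18 * (0) + 0)))))))))))))))))) = 0 := hc 7
    have E8 : c 0 * (0) + (c 1 * (0) + (c 2 * (0) + (c 3 * (0) + (c 4 * (0) + (c 5 * (0) + (c 6 * (0) + (c 7 * (1) + (c 8 * (-2) + (c 9 * (1) + (c 10 * (0) + (c 11 * (0) + (c 12 * (0) + (c 13 * (0) + (c 14 * (0) + (c 15 * (0) + (c 16 * (0) + (c 17 * (0) + (c 18 * (0) + 0)))))))))))))))))) = 0 := hc 8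
    have E9 : c 0 * (0) + (c 1 * (0) + (c 2 * (0) + (c 3 * (0) + (c 4 * (0) + (c 5 * (0) + (c 6 * (0) + (c 7 * (0) + (c 8 * (1) + (c 9 * (-2) + (c 10 * (1) + (c 11 * (0) + (c 12 * (0) + (c 13 * (0) + (c 14 * (0) + (c 15 * (0) + (c 16 * (0) + (c 17 * (0) + (c 18 * (0) + 0)))))))))))))))))) = 0 := hc 9
    have E10 : c 0 * (0) + (c 1 * (0) + (c 2 * (0) + (c 3 * (0) + (c 4 * (0) + (c 5 * (0) + (c 6 * (0) + (c 7 * (0) + (c 8 * (0) + (c 9 * (1) + (c 10 * (-2) + (c 11 * (1) + (c 12 * (0) + (c 13 * (0) + (c 14 * (0) + (c 15 * (0) + (c 16 * (0) + (c 17 * (0) + (c 18 * (0) + 0)))))))))))))))))) = 0 := hc 10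
    have E11 : c 0 * (0) + (c 1 * (0) + (c 2 * (0) + (c 3 * (0) + (c 4 * (0) + (c 5 * (0) + (c 6 * (0) + (c 7 * (0) + (c 8 * (0) + (c 9 * (0) + (c 10 * (1) + (c 11 * (-2) + (c 12 * (1) + (c 13 * (0) + (c 14 * (0) + (c 15 * (0) + (c 16 * (0) + (c 17 * (0) + (c 18 * (0) + 0)))))))))))))))))) = 0 := hc 11
    have E12 : c 0 * (0) + (c 1 * (0) + (c 2 * (0) + (c 3 * (0) + (c 4 * (0) + (c 5 * (0) + (c 6 * (0) + (c 7 * (0) + (c 8 * (0) + (c 9 * (0) + (c 10 * (0) + (c 11 * (1) + (c 12 * (-2) + (c 13 * (1) + (c 14 * (0) + (c 15 * (0) + (c 16 * (0) + (c 17 * (0) + (c 18 * (0) + 0)))))))))))))))))) = 0 := hc 12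
    have E13 : c 0 * (0) + (c 1 * (0) + (c 2 * (0) + (c 3 * (0) + (c 4 * (0) + (c 5 * (0) + (c 6 * (0) + (c 7 * (0) + (c 8 * (0) + (c 9 * (0) + (c 10 * (0) + (c 11 * (0) + (c 12 * (1) + (c 13 * (-2) + (c 14 * (1) + (c 15 * (0) + (c 16 * (0) + (c 17 * (0) + (c 18 * (0) + 0)))))))))))))))))) = 0 := hc 13
    have E14 : c 0 * (0) + (c 1 * (0) + (c 2 * (0) + (c 3 * (0) + (c 4 * (0) + (c 5 * (0) + (c 6 * (0) + (c 7 * (0) + (c 8 * (0) + (c 9 * (0) + (c 10 * (0) + (c 11 * (0) + (c 12 * (0) + (c 13 * (1) + (c 14 * (-2) + (c 15 * (1) + (c 16 * (0) + (c 17 * (0) + (c 18 * (0) + 0)))))))))))))))))) = 0 := hc 14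
    have E15 : c 0 * (0) + (c 1 * (0) + (c 2 * (0) + (c 3 * (0) + (c 4 * (0) + (c 5 * (0) + (c 6 * (0) + (c 7 * (0) + (c 8 * (0) + (c 9 * (0) + (c 10 * (0) + (c 11 * (0) + (c 12 * (0) + (c 13 * (0) + (c 14 * (1) + (c 15 * (-2) + (c 16 * (1) + (c 17 * (0) + (c 18 * (1) + 0)))))))))))))))))) = 0 := hc 15
    have E16 : c 0 * (0) + (c 1 * (0) + (c 2 * (0) + (c 3 * (0) + (c 4 * (0) + (c 5 * (0) + (c 6 * (0) + (c 7 * (0) + (c 8 * (0) + (c 9 * (0) + (c 10 * (0) + (c 11 * (0) + (c 12 * (0) + (c 13 * (0) + (c 14 * (0) + (c 15 * (1) + (c 16 * (-2) + (c 17 * (1) + (c 18 * (0) + 0)))))))))))))))))) = 0 := hc 16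
    have E17 : c 0 * (0) + (c 1 * (0) + (c 2 * (0) + (c 3 * (0) + (c 4 * (0) + (c 5 * (0) + (c 6 * (0) + (c 7 * (0) + (c 8 * (0) + (c 9 * (0) + (c 10 * (0) + (c 11 * (0) + (c 12 * (0) + (c 13 * (0) + (c 14 * (0) + (c 15 * (0) + (c 16 * (1) + (c 17 * (-2) + (c 18 * (0) + 0)))))))))))))))))) = 0 := hc 17
    have E18 : c 0 * (0) + (c 1 * (0) + (c 2 * (0) + (c 3 * (0) + (c 4 * (0) + (c 5 * (0) + (c 6 * (0) + (c 7 * (0) + (c 8 * (0) + (c 9 * (0) + (c 10 * (0) + (c 11 * (0) + (c 12 * (0) + (c 13 * (0) + (c 14 * (0) + (c 15 * (1) + (c 16 * (0) + (c 17 * (0) + (c 18 * (-2) + 0)))))))))))))))))) = 0 := hc 18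
    have F0 : c 0 = c 8 * (3) := by linear_combination (-23) * E0 + (-15) * E1 + (-30) * E2 + (-45) * E3 + (-37) * E4 + (-29) * E5 + (-21) * E6 + (-13) * E7 + (-5) * E8 + (5) * E10 + (10) * E11 + (15) * E12 + (20) * E13 + (25) * E14 + (30) * E15 + (20) * E16 + (10) * E17 + (15) * E18
    have F1 : c 1 = c 8 * (2) := by linear_combination (-20) * E0 + (-14) * E1 + (-27) * E2 + (-40) * E3 + (-33) * E4 + (-26) * E5 + (-19) * E6 + (-12) * E7 + (-5) * E8 + (5) * E10 + (10) * E11 + (15) * E12 + (20) * E13 + (25) * E14 + (30) * E15 + (20) * E16 + (10) * E17 + (15) * E18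
    have F2 : c 2 = c 8 * (4) := by linear_combination (-25) * E0 + (-17) * E1 + (-34) * E2 + (-50) * E3 + (-41) * E4 + (-32) * E5 + (-23) * E6 + (-14) * E7 + (-5) * E8 + (5) * E10 + (10) * E11 + (15) * E12 + (20) * E13 + (25) * E14 + (30) * E15 + (20) * E16 + (10) * E17 + (15) * E18
    have F3 : c 3 = c 8 * (6) := by linear_combination (-30) * E0 + (-20) * E1 + (-40) * E2 + (-60) * E3 + (-49) * E4 + (-38) * E5 + (-27) * E6 + (-16) * E7 + (-5) * E8 + (5) * E10 + (10) * E11 + (15) * E12 + (20) * E13 + (25) * E14 + (30) * E15 + (20) * E16 + (10) * E17 + (15) * E18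
    have F4 : c 4 = c 8 * (5) := by linear_combination (-27) * E0 + (-18) * E1 + (-36) * E2 + (-54) * E3 + (-45) * E4 + (-35) * E5 + (-25) * E6 + (-15) * E7 + (-5) * E8 + (5) * E10 + (10) * E11 + (15) * E12 + (20) * E13 + (25) * E14 + (30) * E15 + (20) * E16 + (10) * E17 + (15) * E18
    have F5 : c 5 = c 8 * (4) := by linear_combination (-24) * E0 + (-16) * E1 + (-32) * E2 + (-48) * E3 + (-40) * E4 + (-32) * E5 + (-23) * E6 + (-14) * E7 + (-5) * E8 + (5) * E10 + (10) * E11 + (15) * E12 + (20) * E13 + (25) * E14 + (30) * E15 + (20) * E16 + (10) * E17 + (15) * E18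
    have F6 : c 6 = c 8 * (3) := by linear_combination (-21) * E0 + (-14) * E1 + (-28) * E2 + (-42) * E3 + (-35) * E4 + (-28) * E5 + (-21) * E6 + (-13) * E7 + (-5) * E8 + (5) * E10 + (10) * E11 + (15) * E12 + (20) * E13 + (25) * E14 + (30) * E15 + (20) * E16 + (10) * E17 + (15) * E18
    have F7 : c 7 = c 8 * (2) := by linear_combination (-18) * E0 + (-12) * E1 + (-24) * E2 + (-36) * E3 + (-30) * E4 + (-24) * E5 + (-18) * E6 + (-12) * E7 + (-5) * E8 + (5) * E10 + (10) * E11 + (15) * E12 + (20) * E13 + (25) * E14 + (30) * E15 + (20) * E16 + (10) * E17 + (15) * E18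
    have F8 : c 8 = c 8 * (1) := by linear_combination (-15) * E0 + (-10) * E1 + (-20) * E2 + (-30) * E3 + (-25) * E4 + (-20) * E5 + (-15) * E6 + (-10) * E7 + (-5) * E8 + (5) * E10 + (10) * E11 + (15) * E12 + (20) * E13 + (25) * E14 + (30) * E15 + (20) * E16 + (10) * E17 + (15) * E18
    have F9 : c 9 = c 8 * (0) := by linear_combination (-12) * E0 + (-8) * E1 + (-16) * E2 + (-24) * E3 + (-20) * E4 + (-16) * E5 + (-12) * E6 + (-8) * E7 + (-4) * E8 + (5) * E10 + (10) * E11 + (15) * E12 + (20) * E13 + (25) * E14 + (30) * E15 + (20) * E16 + (10) * E17 + (15) * E18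
    have F10 : c 10 = c 8 * (-1) := by linear_combination (-9) * E0 + (-6) * E1 + (-12) * E2 + (-18) * E3 + (-15) * E4 + (-12) * E5 + (-9) * E6 + (-6) * E7 + (-3) * E8 + (1) * E9 + (5) * E10 + (10) * E11 + (15) * E12 + (20) * E13 + (25) * E14 + (30) * E15 + (20) * E16 + (10) * E17 + (15) * E18
    have F11 : c 11 = c 8 * (-2) := by linear_combination (-6) * E0 + (-4) * E1 + (-8) * E2 + (-12) * E3 + (-10) * E4 + (-8) * E5 + (-6) * E6 + (-4) * E7 + (-2) * E8 + (2) * E9 + (6) * E10 + (10) * E11 + (15) * E12 + (20) * E13 + (25) * E14 + (30) * E15 + (20) * E16 + (10) * E17 + (15) * E18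
    have F12 : c 12 = c 8 * (-3) := by linear_combination (-3) * E0 + (-2) * E1 + (-4) * E2 + (-6) * E3 + (-5) * E4 + (-4) * E5 + (-3) * E6 + (-2) * E7 + (-1) * E8 + (3) * E9 + (7) * E10 + (11) * E11 + (15) * E12 + (20) * E13 + (25) * E14 + (30) * E15 + (20) * E16 + (10) * E17 + (15) * E18
    have F13 : c 13 = c 8 * (-4) := by linear_combination (4) * E9 + (8) * E10 + (12) * E11 + (16) * E12 + (20) * E13 + (25) * E14 + (30) * E15 + (20) * E16 + (10) * E17 + (15) * E18
    have F14 : c 14 = c 8 * (-5) := by linear_combination (3) * E0 + (2) * E1 + (4) * E2 + (6) * E3 + (5) * E4 + (4) * E5 + (3) * E6 + (2) * E7 + (1) * E8 + (5) * E9 + (9) * E10 + (13) * E11 + (17) * E12 + (21) * E13 + (25) * E14 + (30) * E15 + (20) * E16 + (10) * E17 + (15) * E18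
    have F15 : c 15 = c 8 * (-6) := by linear_combination (6) * E0 + (4) * E1 + (8) * E2 + (12) * E3 + (10) * E4 + (8) * E5 + (6) * E6 + (4) * E7 + (2) * E8 + (6) * E9 + (10) * E10 + (14) * E11 + (18) * E12 + (22) * E13 + (26) * E14 + (30) * E15 + (20) * E16 + (10) * E17 + (15) * E18
    have F16 : c 16 = c 8 * (-4) := by linear_combination (4) * E9 + (8) * E10 + (12) * E11 + (16) * E12 + (20) * E13 + (24) * E14 + (28) * E15 + (18) * E16 + (9) * E17 + (14) * E18
    have F17 : c 17 = c 8 * (-2) := by linear_combination (-6) * E0 + (-4) * E1 + (-8) * E2 + (-12) * E3 + (-10) * E4 + (-8) * E5 + (-6) * E6 + (-4) * E7 + (-2) * E8 + (2) * E9 + (6) * E10 + (10) * E11 + (14) * E12 + (18) * E13 + (22) * E14 + (26) * E15 + (17) * E16 + (8) * E17 + (13) * E18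
    have F18 : c 18 = c 8 * (-3) := by linear_combination (-3) * E0 + (-2) * E1 + (-4) * E2 + (-6) * E3 + (-5) * E4 + (-4) * E5 + (-3) * E6 + (-2) * E7 + (-1) * E8 + (3) * E9 + (7) * E10 + (11) * E11 + (15) * E12 + (19) * E13 + (23) * E14 + (27) * E15 + (18) * E16 + (9) * E17 + (13) * E18
    refine ⟨c 8, ?_⟩
    funext i
    fin_cases i
    exacts [F0, F1, F2, F3, F4, F5, F6, F7, F8, F9, F10, F11, F12, F13, F14, F15, F16, F17, F18]
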